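/- Let O be a discrete valuation ring with maximal ideal p, S a finitely generated free O-module with a symmetric bilinear form φ : S × S → O, and for i ≥ 0 define S(i) = {x ∈ S : φ(x,y) ∈ p^i for all y ∈ S}. If φ becomes nondegenerate over the fraction field of O, then there exists m_0 with S(m_0) ⊆ pS, and the images kS(i) = (S(i) + pS)/pS form a decreasing filtration of kS = S/pS with kS(0) = kS and kS(1) = rad(kφ), where kφ is the induced form on S/pS. -/

import Mathlib

/-- The Jantzen submodule `S(i) = {x ∈ S : φ(x,y) ∈ P^i for all y}`. -/
def jantzenSub {O : Type*} [CommRing O] {S : Type*} [AddCommGroup S] [Module O S]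
    (P : Ideal O) (φ : S →ₗ[O] S →ₗ[O] O) (i : ℕ) : Submodule O S where
  carrier := {x | ∀ y : S, φ x y ∈ P ^ i}
  add_mem' := by
    intro a b ha hb y
    rw [map_add, LinearMap.add_apply]
    exact Ideal.add_mem _ (ha y) (hb y)
  zero_mem' := by intro y; simp
  smul_mem' := by
    intro r x hx y
    rw [map_smul, LinearMap.smul_apply, smul_eq_mul]
    exact Ideal.mul_mem_left _ r (hx y)

/-- Let `O` be a discrete valuation ring with maximal ideal `p`, `S` a
finitely generated free `O`-module with a symmetric bilinear form `φ : S × S → O`, and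
`S(i) = {x : φ(x,y) ∈ p^i ∀y}`.  If `φ` is nondegenerate over the fraction field of `O`
(equivalently, its kernel over `O` is trivial), then there is `m₀` with `S(m₀) ⊆ pS`,
and the images `kS(i) = (S(i) + pS)/pS` form a decreasing filtration of `kS = S/pS` with
`kS(0) = kS` and `kS(1) = rad(kφ)` (the image of `x` lies in `kS(1)` iff
`kφ(x̄, ·) = 0`, i.e. iff `φ(x,y) ∈ p` for all `y`). -/
theorem jantzen_filtration {O : Type*} [CommRing O] [IsDomain O] [IsDiscreteValuationRing O]
    {S : Type*} [AddCommGroup S] [Module O S] [Module.Free O S] [Module.Finite O S]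
    (φ : S →ₗ[O] S →ₗ[O] O) (hsymm : ∀ x y : S, φ x y = φ y x)
    (hnd : ∀ x : S, (∀ y : S, φ x y = 0) → x = 0) :
    (∃ m₀ : ℕ, jantzenSub (IsLocalRing.maximalIdeal O) φ m₀ ≤
        (IsLocalRing.maximalIdeal O) • (⊤ : Submodule O S)) ∧
    (∀ i : ℕ,
      Submodule.map (Submodule.mkQ ((IsLocalRing.maximalIdeal O) • (⊤ : Submodule O S)))
          (jantzenSub (IsLocalRing.maximalIdeal O) φ (i + 1)) ≤
        Submodule.map (Submodule.mkQ ((IsLocalRing.maximalIdeal O) • (⊤ : Submodule O S)))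
          (jantzenSub (IsLocalRing.maximalIdeal O) φ i)) ∧
    (Submodule.map (Submodule.mkQ ((IsLocalRing.maximalIdeal O) • (⊤ : Submodule O S)))
        (jantzenSub (IsLocalRing.maximalIdeal O) φ 0) = ⊤) ∧
    (∀ x : S,
      Submodule.mkQ ((IsLocalRing.maximalIdeal O) • (⊤ : Submodule O S)) x ∈
        Submodule.map (Submodule.mkQ ((IsLocalRing.maximalIdeal O) • (⊤ : Submodule O S)))
          (jantzenSub (IsLocalRing.maximalIdeal O) φ 1) ↔
      ∀ y : S, φ x y ∈ IsLocalRing.maximalIdeal O) := by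
  classical
  set p := IsLocalRing.maximalIdeal O with hp
  have hpS : ∀ u ∈ p • (⊤ : Submodule O S), ∀ y, φ u y ∈ p := by
    intro u hu y
    refine Submodule.smul_induction_on hu ?_ ?_
    · intro r hr n _
      rw [map_smul, LinearMap.smul_apply, smul_eq_mul]
      exact Ideal.mul_mem_right _ _ hr
    · intro a c ha hc
      rw [map_add, LinearMap.add_apply]
      exact Ideal.add_mem _ ha hc
  refine ⟨?_, ?_, ?_, ?_⟩
  · -- existence of m₀
    obtain ⟨π, hπ⟩ := IsDiscreteValuationRing.exists_irreducible O
    let b := Module.Free.chooseBasis O S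
    set M := LinearMap.toMatrix₂ b b φ with hM
    have hMij : ∀ i j, M i j = φ (b i) (b j) := fun i j => LinearMap.toMatrix₂_apply _ _ _ _ _
    have hdet : M.det ≠ 0 := by
      intro h
      obtain ⟨v, hv, hMv⟩ := Matrix.exists_mulVec_eq_zero_iff.2 h
      apply hv
      have hx0 : (∑ j, v j • b j) = 0 := by
        apply hnd
        intro y
        have hb0 : ∀ i, φ (∑ j, v j • b j) (b i) = 0 := by
          intro i
          have hMvi : ∑ j, M i j * v j = 0 := by
            have := congrFun hMv i
            simpa [Matrix.mulVec, dotProduct] using this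
          rw [map_sum, LinearMap.sum_apply]
          simp only [map_smul, LinearMap.smul_apply, smul_eq_mul]
          rw [← hMvi]
          exact Finset.sum_congr rfl fun j _ => by
            rw [hsymm (b j) (b i), ← hMij i j]; exact mul_comm _ _
        have : φ (∑ j, v j • b j) = 0 := b.ext fun i => by simpa using hb0 i
        rw [this]; rfl
      have hli := Fintype.linearIndependent_iff.1 b.linearIndependent v hx0
      funext i; exact hli i
    obtain ⟨d, u, hdu⟩ := IsDiscreteValuationRing.eq_unit_mul_pow_irreducible hdet hπ
    refine ⟨d + 1, ?_⟩
    intro x hx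
    have hxrepr : (∑ i, b.repr x i • b i) = x := b.sum_repr x
    set c : _ → O := fun i => b.repr x i with hc
    have hcmem : ∀ i, c i ∈ p := by
      intro i
      have hw : ∀ j, M.transpose.mulVec c j ∈ p ^ (d + 1) := by
        intro j
        have : M.transpose.mulVec c j = φ x (b j) := by
          simp only [Matrix.mulVec, dotProduct, Matrix.transpose_apply]
          rw [← hxrepr, map_sum]
          simp only [LinearMap.sum_apply, LinearMap.map_smul, LinearMap.smul_apply, smul_eq_mul]
          exact Finset.sum_congr rfl fun i _ => by rw [hMij, mul_comm]
        rw [this]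
        exact hx (b j)
      have hdetc : M.det * c i ∈ p ^ (d + 1) := by
        have h1 : (M.transpose.adjugate).mulVec (M.transpose.mulVec c) = M.det • c := by
          rw [Matrix.mulVec_mulVec, Matrix.adjugate_mul, ← Matrix.det_transpose M]
          ext j
          simp [Matrix.smul_mulVec, Matrix.one_mulVec]
        have h2 : M.det * c i = ∑ j, M.transpose.adjugate i j * M.transpose.mulVec c j := by
          have := congrFun h1 i
          simp only [Matrix.mulVec, dotProduct, Pi.smul_apply, smul_eq_mul] at this
          rw [← this]
          simp [Matrix.mulVec, dotProduct]
        rw [h2]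
        exact Ideal.sum_mem _ fun j _ => Ideal.mul_mem_left _ _ (hw j)
      rw [hdu] at hdetc
      have hspan : p ^ (d + 1) = Ideal.span {π ^ (d + 1)} := by
        rw [hp, hπ.maximalIdeal_eq, Ideal.span_singleton_pow]
      rw [hspan, Ideal.mem_span_singleton] at hdetc
      have hdvd : π ^ (d + 1) ∣ π ^ d * c i := by
        rcases hdetc with ⟨t, ht⟩
        refine ⟨(↑u⁻¹ : O) * t, ?_⟩
        have : (↑u⁻¹ : O) * (↑u * π ^ d * c i) = (↑u⁻¹ : O) * (π ^ (d + 1) * t) := by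
          rw [ht]
        calc π ^ d * c i = (↑u⁻¹ : O) * (↑u * π ^ d * c i) := by
              rw [← mul_assoc, ← mul_assoc, Units.inv_mul, one_mul]
          _ = π ^ (d + 1) * ((↑u⁻¹ : O) * t) := by rw [this]; ring
      rw [pow_succ, mul_dvd_mul_iff_left (pow_ne_zero d hπ.ne_zero)] at hdvd
      rw [hp, hπ.maximalIdeal_eq, Ideal.mem_span_singleton]
      exact hdvd
    rw [← hxrepr]
    exact Submodule.sum_mem _ fun i _ =>
      Submodule.smul_mem_smul (hcmem i) Submodule.mem_top
  · intro i
    refine Submodule.map_mono fun x hx y => ?_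
    exact Ideal.pow_le_pow_right (Nat.le_succ i) (hx y)
  · rw [eq_top_iff]
    rintro z -
    obtain ⟨x, rfl⟩ := Submodule.mkQ_surjective _ z
    exact ⟨x, fun y => by simp, rfl⟩
  · intro x
    constructor
    · rintro ⟨z, hz, hzx⟩ y
      have hxz : x - z ∈ p • (⊤ : Submodule O S) := by
        rw [← Submodule.Quotient.eq]
        exact hzx.symm
      have h1 : φ z y ∈ p := by simpa using hz y
      have h2 : φ (x - z) y ∈ p := hpS _ hxz y
      have : φ x y = φ z y + φ (x - z) y := by
        rw [← LinearMap.add_apply, ← map_add, add_sub_cancel]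
      rw [this]
      exact Ideal.add_mem _ h1 h2
    · intro h
      exact ⟨x, fun y => by simpa using h y, rfl⟩
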